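/- Let m ≥ 2 be an integer and let C ≥ 0 be a real constant such that for every positive integer N and every continuous m-linear form U : (ℝ^N)^m → ℝ (ℝ^N with the sup norm) one has Σ_{j₁=1}^{N} ( Σ_{j₂,...,j_m=1}^{N} |U(e_{j₁},...,e_{j_m})|² )^{1/2} ≤ C · ‖U‖. Then C ≥ (√2)^{m-1}. -/

import Mathlib

open Finset

namespace ML


/-- recursion computing the extremal form's value -/
def Gfun (x : ℕ → ℕ → ℝ) : ℕ → ℕ → ℝ
  | 0, r => x 0 r
  | (k+1), r => (Gfun x k (2*r) + Gfun x k (2*r+1)) * x (k+1) (2*r)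
              + (Gfun x k (2*r) - Gfun x k (2*r+1)) * x (k+1) (2*r+1)

lemma abs_combo (A B u v Mu : ℝ) (hu : |u| ≤ Mu) (hv : |v| ≤ Mu) :
    |(A+B)*u + (A-B)*v| ≤ 2 * max |A| |B| * Mu := by
  have hMu : 0 ≤ Mu := le_trans (abs_nonneg _) hu
  have h1 : |(A+B)*u + (A-B)*v| ≤ |A+B| * Mu + |A-B| * Mu := by
    calc |(A+B)*u + (A-B)*v| ≤ |(A+B)*u| + |(A-B)*v| := abs_add_le _ _
    _ = |A+B| * |u| + |A-B| * |v| := by rw [abs_mul, abs_mul]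
    _ ≤ |A+B| * Mu + |A-B| * Mu :=
        add_le_add (mul_le_mul_of_nonneg_left hu (abs_nonneg _))
          (mul_le_mul_of_nonneg_left hv (abs_nonneg _))
  have h2 : |A+B| + |A-B| ≤ 2 * max |A| |B| := by
    have hmA := le_max_left |A| |B|
    have hmB := le_max_right |A| |B|
    have hA1 := le_abs_self A; have hA2 := neg_abs_le A
    have hB1 := le_abs_self B; have hB2 := neg_abs_le B
    rcases abs_cases (A+B) with ⟨e1,_⟩|⟨e1,_⟩ <;> rcases abs_cases (A-B) with ⟨e2,_⟩|⟨e2,_⟩ <;>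
      rw [e1, e2] <;> linarith
  have h3 : (|A+B| + |A-B|) * Mu ≤ 2 * max |A| |B| * Mu :=
    mul_le_mul_of_nonneg_right h2 hMu
  nlinarith [h1, h3]

lemma Gfun_bound (x : ℕ → ℕ → ℝ) (M : ℕ → ℝ) (hx : ∀ i r, |x i r| ≤ M i) :
    ∀ k r, |Gfun x k r| ≤ 2^k * ∏ i ∈ range (k+1), M i := by
  intro k
  induction k with
  | zero => intro r; simpa [Gfun] using hx 0 r
  | succ k ih =>
    intro r
    have hM : 0 ≤ M (k+1) := le_trans (abs_nonneg _) (hx (k+1) 0)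
    have hb := abs_combo (Gfun x k (2*r)) (Gfun x k (2*r+1)) _ _ (M (k+1))
      (hx (k+1) (2*r)) (hx (k+1) (2*r+1))
    rw [Gfun]
    refine hb.trans ?_
    have hmax : max |Gfun x k (2*r)| |Gfun x k (2*r+1)| ≤ 2^k * ∏ i ∈ range (k+1), M i :=
      max_le (ih _) (ih _)
    have h0 : (0:ℝ) ≤ max |Gfun x k (2*r)| |Gfun x k (2*r+1)| :=
      le_trans (abs_nonneg _) (le_max_left _ _)
    calc 2 * max |Gfun x k (2*r)| |Gfun x k (2*r+1)| * M (k+1)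
        ≤ 2 * (2^k * ∏ i ∈ range (k+1), M i) * M (k+1) := by
          apply mul_le_mul_of_nonneg_right _ hM
          linarith
    _ = 2^(k+1) * ∏ i ∈ range (k+2), M i := by
          rw [prod_range_succ, prod_range_succ, prod_range_succ]
          ring

/-- factor of the "row" expansion -/
def Yx (x : ℕ → ℕ → ℝ) (i j : ℕ) : ℝ :=
  x (i+1) (2*(j/2^(i+1))) + (if (j/2^i) % 2 = 1 then (-1:ℝ) else 1) * x (i+1) (2*(j/2^(i+1))+1)

lemma sum_range_add' (f : ℕ → ℝ) (a b : ℕ) :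
    ∑ i ∈ range (a+b), f i = ∑ i ∈ range a, f i + ∑ i ∈ range b, f (a + i) := by
  induction b with
  | zero => simp
  | succ b ih => rw [← Nat.add_assoc, sum_range_succ, ih, sum_range_succ]; ring

lemma Gfun_eq (x : ℕ → ℕ → ℝ) :
    ∀ k r, Gfun x k r
      = ∑ s ∈ range (2^k), x 0 (2^k*r+s) * ∏ i ∈ range k, Yx x i (2^k*r+s) := by
  intro k
  induction k with
  | zero => intro r; simp [Gfun]
  | succ k ih =>
    intro r
    have h2k : 0 < (2:ℕ)^k := Nat.two_pow_pos _
    have hdiv1 : ∀ b < 2, ∀ s < 2^k, (2^k*(2*r+b) + s)/2^k = 2*r+b := by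
      intro b hb s hs
      rw [show 2^k*(2*r+b) + s = s + (2*r+b)*2^k from by ring,
        Nat.add_mul_div_right _ _ h2k, Nat.div_eq_of_lt hs, Nat.zero_add]
    have hdiv2 : ∀ b < 2, ∀ s < 2^k, (2^k*(2*r+b) + s)/2^(k+1) = r := by
      intro b hb s hs
      have h1 : 2^k*(2*r+b) + s = (b*2^k + s) + r*2^(k+1) := by rw [pow_succ]; ring
      have hble : b*2^k ≤ 2^k := by
        calc b*2^k ≤ 1*2^k := Nat.mul_le_mul_right _ (by omega)
        _ = 2^k := one_mul _
      have h2 : b*2^k + s < 2^(k+1) := by rw [pow_succ]; omega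
      rw [h1, Nat.add_mul_div_right _ _ (Nat.two_pow_pos _),
        Nat.div_eq_of_lt h2, Nat.zero_add]
    have expand : ∀ b < 2,
        ∑ s ∈ range (2^k), x 0 (2^k*(2*r+b)+s) * ∏ i ∈ range (k+1), Yx x i (2^k*(2*r+b)+s)
          = Gfun x k (2*r+b) *
            (x (k+1) (2*r) + (if b = 1 then (-1:ℝ) else 1) * x (k+1) (2*r+1)) := by
      intro b hb
      rw [ih (2*r+b), sum_mul]
      refine sum_congr rfl ?_
      intro s hs
      have hs' := mem_range.mp hs
      rw [prod_range_succ, Yx, hdiv1 b hb s hs', hdiv2 b hb s hs']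
      have hmod : (2*r+b) % 2 = b := by omega
      rw [hmod]
      ring
    rw [Gfun, show (2:ℕ)^(k+1) = 2^k + 2^k from by rw [pow_succ]; ring, sum_range_add']
    have e1 : ∀ s : ℕ, (2^k+2^k)*r + (2^k+s) = 2^k*(2*r+1) + s := by intro s; ring
    have e0 : ∀ s : ℕ, (2^k+2^k)*r + s = 2^k*(2*r+0) + s := by intro s; ring
    simp only [e1]
    simp only [e0]
    rw [expand 0 (by norm_num), expand 1 (by norm_num)]
    norm_num
    ring


variable (m : ℕ)

lemma restIdx_lt (j0 : Fin (2^(m+1))) (t : Fin (m+1) → Fin 2) (i : Fin (m+1)) :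
    2 * ((j0:ℕ) / 2^((i:ℕ)+1)) + (t i : ℕ) < 2^(m+1) := by
  have h1 : (j0:ℕ) / 2^((i:ℕ)+1) < 2^m := by
    apply Nat.div_lt_of_lt_mul
    calc (j0:ℕ) < 2^(m+1) := j0.isLt
    _ = 2^1 * 2^m := by rw [← pow_add]; ring_nf
    _ ≤ 2^((i:ℕ)+1) * 2^m := by
        apply Nat.mul_le_mul_right
        exact Nat.pow_le_pow_right (by norm_num) (by omega)
  have h2 : (t i : ℕ) < 2 := (t i).isLt
  have h3 : (2:ℕ)^(m+1) = 2 * 2^m := by rw [pow_succ]; ring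
  omega

def restIdx (j0 : Fin (2^(m+1))) (t : Fin (m+1) → Fin 2) (i : Fin (m+1)) : Fin (2^(m+1)) :=
  ⟨2 * ((j0:ℕ) / 2^((i:ℕ)+1)) + (t i : ℕ), restIdx_lt m j0 t i⟩

def idx (j0 : Fin (2^(m+1))) (t : Fin (m+1) → Fin 2) : Fin (m+2) → Fin (2^(m+1)) :=
  Fin.cons j0 (restIdx m j0 t)

def sgn (j0 : Fin (2^(m+1))) (t : Fin (m+1) → Fin 2) : ℝ :=
  ∏ i : Fin (m+1), (if ((j0:ℕ)/2^(i:ℕ)) % 2 = 1 then (-1:ℝ) else 1) ^ (t i : ℕ)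

noncomputable def T : MultilinearMap ℝ (fun _ : Fin (m+2) => (Fin (2^(m+1)) → ℝ)) ℝ :=
  ∑ j0 : Fin (2^(m+1)), ∑ t : Fin (m+1) → Fin 2,
    sgn m j0 t • (MultilinearMap.mkPiAlgebra ℝ (Fin (m+2)) ℝ).compLinearMap
      (fun i => LinearMap.proj (R := ℝ) (φ := fun _ : Fin (2^(m+1)) => ℝ) (idx m j0 t i))

lemma T_apply (x : Fin (m+2) → (Fin (2^(m+1)) → ℝ)) :
    T m x = ∑ j0 : Fin (2^(m+1)), ∑ t : Fin (m+1) → Fin 2,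
      sgn m j0 t * (x 0 j0 * ∏ i : Fin (m+1), x i.succ (restIdx m j0 t i)) := by
  simp [T, MultilinearMap.compLinearMap, MultilinearMap.mkPiAlgebra_apply,
    Fin.prod_univ_succ, idx]

-- NEW PART

/-- extension of `x` by zero to all of `ℕ × ℕ` -/
noncomputable def Xext (x : Fin (m+2) → (Fin (2^(m+1)) → ℝ)) (i r : ℕ) : ℝ :=
  if h : i < m+2 ∧ r < 2^(m+1) then x ⟨i, h.1⟩ ⟨r, h.2⟩ else 0

lemma T_eq_Gfun (x : Fin (m+2) → (Fin (2^(m+1)) → ℝ)) :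
    T m x = Gfun (Xext m x) (m+1) 0 := by
  have key : ∀ j0 : Fin (2^(m+1)),
      (∑ t : Fin (m+1) → Fin 2,
        sgn m j0 t * (x 0 j0 * ∏ i : Fin (m+1), x i.succ (restIdx m j0 t i)))
      = x 0 j0 * ∏ i : Fin (m+1), Yx (Xext m x) (i:ℕ) (j0:ℕ) := by
    intro j0
    have h1 : ∀ t : Fin (m+1) → Fin 2,
        sgn m j0 t * (x 0 j0 * ∏ i : Fin (m+1), x i.succ (restIdx m j0 t i))
        = x 0 j0 * ∏ i : Fin (m+1),
            ((if ((j0:ℕ)/2^(i:ℕ)) % 2 = 1 then (-1:ℝ) else 1) ^ (t i : ℕ)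
              * Xext m x ((i:ℕ)+1) (2*((j0:ℕ)/2^((i:ℕ)+1)) + (t i : ℕ))) := by
      intro t
      have h2 : ∀ i : Fin (m+1),
          x i.succ (restIdx m j0 t i)
            = Xext m x ((i:ℕ)+1) (2*((j0:ℕ)/2^((i:ℕ)+1)) + (t i : ℕ)) := by
        intro i
        rw [Xext, dif_pos ⟨by omega, restIdx_lt m j0 t i⟩]
        congr 1
      rw [sgn, Finset.prod_mul_distrib]
      rw [Finset.prod_congr rfl (fun i _ => h2 i)]
      ring
    rw [Finset.sum_congr rfl (fun t _ => h1 t), ← Finset.mul_sum]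
    congr 1
    have h3 := Finset.prod_univ_sum (fun _ : Fin (m+1) => (univ : Finset (Fin 2)))
      (fun i ti => (if ((j0:ℕ)/2^(i:ℕ)) % 2 = 1 then (-1:ℝ) else 1) ^ (ti : ℕ)
        * Xext m x ((i:ℕ)+1) (2*((j0:ℕ)/2^((i:ℕ)+1)) + (ti : ℕ)))
    rw [Fintype.piFinset_univ] at h3
    rw [← h3]
    refine Finset.prod_congr rfl ?_
    intro i _
    rw [Yx, Fin.sum_univ_two]
    norm_num
  rw [T_apply, Finset.sum_congr rfl (fun j0 _ => key j0)]
  rw [Gfun_eq]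
  have h4 : ∀ j0 : Fin (2^(m+1)),
      x 0 j0 * ∏ i : Fin (m+1), Yx (Xext m x) (i:ℕ) (j0:ℕ)
      = Xext m x 0 (j0:ℕ) * ∏ i ∈ range (m+1), Yx (Xext m x) i (j0:ℕ) := by
    intro j0
    congr 1
    · simp [Xext]
    · exact Fin.prod_univ_eq_prod_range (fun i => Yx (Xext m x) i (j0:ℕ)) (m+1)
  rw [Finset.sum_congr rfl (fun j0 _ => h4 j0)]
  rw [Fin.sum_univ_eq_sum_range (fun s => Xext m x 0 s * ∏ i ∈ range (m+1), Yx (Xext m x) i s)]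
  refine Finset.sum_congr rfl ?_
  intro s _
  norm_num

lemma T_bound (x : Fin (m+2) → (Fin (2^(m+1)) → ℝ)) :
    ‖T m x‖ ≤ (2^(m+1) : ℝ) * ∏ i : Fin (m+2), ‖x i‖ := by
  set M : ℕ → ℝ := fun i => if h : i < m+2 then ‖x ⟨i, h⟩‖ else 0 with hM
  have hx : ∀ i r, |Xext m x i r| ≤ M i := by
    intro i r
    by_cases h1 : i < m+2
    · by_cases h2 : r < 2^(m+1)
      · rw [Xext, dif_pos ⟨h1, h2⟩, hM]
        simp only [dif_pos h1]
        exact norm_le_pi_norm (x ⟨i, h1⟩) ⟨r, h2⟩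
      · rw [Xext, dif_neg (by tauto), hM]
        simp only [dif_pos h1, abs_zero]
        exact norm_nonneg _
    · rw [Xext, dif_neg (by tauto), hM]
      simp [h1]
  have hb := Gfun_bound (Xext m x) M hx (m+1) 0
  rw [T_eq_Gfun, Real.norm_eq_abs]
  refine hb.trans (le_of_eq ?_)
  congr 1
  rw [← Fin.prod_univ_eq_prod_range (fun i => M i) (m+2)]
  refine Finset.prod_congr rfl ?_
  intro i _
  rw [hM]
  simp only [dif_pos i.isLt, Fin.eta]



lemma sgn_mul_self (j0 : Fin (2^(m+1))) (t : Fin (m+1) → Fin 2) :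
    sgn m j0 t * sgn m j0 t = 1 := by
  rw [sgn, ← Finset.prod_mul_distrib]
  apply Finset.prod_eq_one
  intro i _
  by_cases hc : ((j0:ℕ)/2^(i:ℕ)) % 2 = 1 <;> simp [hc, ← mul_pow]

lemma restIdx_inj (j₁ : Fin (2^(m+1))) (t t' : Fin (m+1) → Fin 2)
    (h : restIdx m j₁ t = restIdx m j₁ t') : t = t' := by
  funext i
  have h1 := congrFun h i
  rw [restIdx, restIdx, Fin.mk.injEq] at h1
  have h2 : (t i : ℕ) = (t' i : ℕ) := by omega
  exact Fin.ext h2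

lemma T_eval (j₁ : Fin (2^(m+1))) (rest : Fin (m+1) → Fin (2^(m+1))) :
    T m (Fin.cons (Pi.single j₁ 1) (fun i => Pi.single (rest i) 1))
      = ∑ t : Fin (m+1) → Fin 2, (if restIdx m j₁ t = rest then sgn m j₁ t else 0) := by
  rw [T_apply]
  rw [Finset.sum_eq_single j₁]
  · refine Finset.sum_congr rfl (fun t _ => ?_)
    rw [Fin.cons_zero, Pi.single_eq_same]
    have hprod : (∏ i : Fin (m+1),
        ((Fin.cons (Pi.single j₁ (1:ℝ)) (fun i' => Pi.single (rest i') (1:ℝ)) :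
            ∀ _ : Fin (m+2), Fin (2^(m+1)) → ℝ) i.succ) (restIdx m j₁ t i))
        = if restIdx m j₁ t = rest then 1 else 0 := by
      simp only [Fin.cons_succ, Pi.single_apply]
      rw [Finset.prod_boole]
      congr 1
      simp [funext_iff, eq_comm]
    rw [hprod]
    by_cases h : restIdx m j₁ t = rest <;> simp [h]
  · intro b _ hb
    apply Finset.sum_eq_zero
    intro t _
    rw [Fin.cons_zero, Pi.single_eq_of_ne hb]
    ring
  · intro h
    exact absurd (Finset.mem_univ j₁) h

lemma inner_sum (j₁ : Fin (2^(m+1))) :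
    ∑ rest : Fin (m+1) → Fin (2^(m+1)),
      |T m (Fin.cons (Pi.single j₁ 1) (fun i => Pi.single (rest i) 1))| ^ 2 = 2^(m+1) := by
  have step1 : ∀ rest : Fin (m+1) → Fin (2^(m+1)),
      |T m (Fin.cons (Pi.single j₁ 1) (fun i => Pi.single (rest i) 1))| ^ 2
      = ∑ t : Fin (m+1) → Fin 2, ∑ t' : Fin (m+1) → Fin 2,
          (if restIdx m j₁ t = rest then sgn m j₁ t else 0)
          * (if restIdx m j₁ t' = rest then sgn m j₁ t' else 0) := by
    intro rest
    rw [sq_abs, T_eval, pow_two, Finset.sum_mul_sum]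
  rw [Finset.sum_congr rfl (fun rest _ => step1 rest)]
  rw [Finset.sum_comm]
  have step2 : ∀ t : Fin (m+1) → Fin 2,
      (∑ rest : Fin (m+1) → Fin (2^(m+1)), ∑ t' : Fin (m+1) → Fin 2,
        (if restIdx m j₁ t = rest then sgn m j₁ t else 0)
        * (if restIdx m j₁ t' = rest then sgn m j₁ t' else 0)) = 1 := by
    intro t
    rw [Finset.sum_comm]
    have step3 : ∀ t' : Fin (m+1) → Fin 2,
        (∑ rest : Fin (m+1) → Fin (2^(m+1)),
          (if restIdx m j₁ t = rest then sgn m j₁ t else 0)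
          * (if restIdx m j₁ t' = rest then sgn m j₁ t' else 0))
        = if t' = t then 1 else 0 := by
      intro t'
      simp only [ite_mul, zero_mul, mul_ite, mul_zero]
      rw [Finset.sum_ite_eq]
      simp only [Finset.mem_univ, if_true]
      by_cases h : t' = t
      · subst h
        simp [sgn_mul_self]
      · have h2 : ¬ (restIdx m j₁ t = restIdx m j₁ t') :=
          fun hc => h (restIdx_inj m j₁ t' t hc.symm)
        simp [h2, h]
    rw [Finset.sum_congr rfl (fun t' _ => step3 t')]
    simp
  rw [Finset.sum_congr rfl (fun t _ => step2 t)]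
  simp [Finset.card_univ]


end ML

/-- **Optimality of the constants of the mixed (ℓ₁,ℓ₂)-Littlewood inequality.**
If `C ≥ 0` is such that for every positive integer `N` and every continuous `m`-linear
form `U` on `(ℝ^N)^m` (sup norm, `m ≥ 2` written as `m + 2`) the mixed
`(ℓ₁,ℓ₂)`-Littlewood inequality holds with constant `C`, then `C ≥ (√2)^{m-1}`. -/
theorem mixed_littlewood_lower_bound (m : ℕ) (C : ℝ) (hC : 0 ≤ C)
    (h : ∀ N : ℕ, 0 < N →
      ∀ U : ContinuousMultilinearMap ℝ (fun _ : Fin (m + 2) => (Fin N → ℝ)) ℝ,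
        ∑ j₁ : Fin N, Real.sqrt (∑ j : Fin (m + 1) → Fin N,
            |U (Fin.cons (Pi.single j₁ 1) (fun i => Pi.single (j i) 1))| ^ 2)
          ≤ C * ‖U‖) :
    Real.sqrt 2 ^ (m + 1) ≤ C := by
  classical
  have hN : 0 < 2^(m+1) := Nat.two_pow_pos _
  have hbound := ML.T_bound m
  set U : ContinuousMultilinearMap ℝ (fun _ : Fin (m+2) => (Fin (2^(m+1)) → ℝ)) ℝ :=
    (ML.T m).mkContinuous (2^(m+1):ℝ) hbound with hUdef
  have h1 := h (2^(m+1)) hN U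
  have e1 : ∀ j₁ : Fin (2^(m+1)), (∑ j : Fin (m+1) → Fin (2^(m+1)),
      |U (Fin.cons (Pi.single j₁ 1) (fun i => Pi.single (j i) 1))| ^ 2) = (2:ℝ)^(m+1) := by
    intro j₁
    have : ∀ j : Fin (m+1) → Fin (2^(m+1)),
        U (Fin.cons (Pi.single j₁ 1) (fun i => Pi.single (j i) 1))
          = ML.T m (Fin.cons (Pi.single j₁ 1) (fun i => Pi.single (j i) 1)) := by
      intro j; rfl
    rw [Finset.sum_congr rfl (fun j _ => by rw [this j])]
    exact ML.inner_sum m j₁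
  have hLHS : (∑ j₁ : Fin (2^(m+1)), Real.sqrt (∑ j : Fin (m+1) → Fin (2^(m+1)),
      |U (Fin.cons (Pi.single j₁ 1) (fun i => Pi.single (j i) 1))| ^ 2))
      = (2^(m+1):ℝ) * Real.sqrt 2 ^ (m+1) := by
    rw [Finset.sum_congr rfl (fun j₁ _ => by rw [e1 j₁])]
    have h0 : (Real.sqrt 2 ^ (m+1))^2 = (2:ℝ)^(m+1) := by
      rw [← pow_mul, mul_comm, pow_mul, Real.sq_sqrt (by norm_num : (0:ℝ) ≤ 2)]
    have hsq : Real.sqrt ((2:ℝ)^(m+1)) = Real.sqrt 2 ^ (m+1) := by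
      rw [← h0, Real.sqrt_sq (by positivity)]
    rw [hsq, Finset.sum_const, Finset.card_univ, Fintype.card_fin, nsmul_eq_mul]
    push_cast
    ring
  rw [hLHS] at h1
  have hnorm : ‖U‖ ≤ (2^(m+1):ℝ) :=
    (ML.T m).mkContinuous_norm_le (by positivity) hbound
  have h2 : C * ‖U‖ ≤ C * (2^(m+1):ℝ) := mul_le_mul_of_nonneg_left hnorm hC
  have h3 : (2^(m+1):ℝ) * Real.sqrt 2 ^ (m+1) ≤ C * (2^(m+1):ℝ) := le_trans h1 h2
  have hpos : (0:ℝ) < (2:ℝ)^(m+1) := by positivity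
  rw [mul_comm C _] at h3
  exact le_of_mul_le_mul_left h3 hpos
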